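/- With notations as above, the line through the three harmonic points u₁', u₂', u₃' (the harmonic polar p^# of p with respect to Δ) coincides with the frame polar p^•: in the homogeneous coordinates defined by the frame (p₁,p₂,p₃,p), both are the line of equation x₁+x₂+x₃ = 0. -/

import Mathlib

/-- `d` is a representative of the fourth harmonic of `(P a, P b, P c)`. -/
def IsFourthHarmonic (K : Type*) {V : Type*} [Field K] [AddCommGroup V] [Module K V]
    (a b c d : V) : Prop :=
  ∃ α β : K, α ≠ 0 ∧ β ≠ 0 ∧ c = α • a + β • b ∧
    ∃ t : K, t ≠ 0 ∧ d = t • (α • a - β • b)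

/-- `φ` represents the frame polar hyperplane of `P p` with respect to the triangle
`(P (v 0), P (v 1), P (v 2))`: it is the sum of the dual basis of a basis adapted to
the frame `(P (v 0), P (v 1), P (v 2), P p)`. -/
def IsFramePolar {K V : Type*} [Field K] [AddCommGroup V] [Module K V]
    (v : Fin 3 → V) (p : V) (φ : Module.Dual K V) : Prop :=
  ∃ (b : Module.Basis (Fin 3) K V) (c : Fin 3 → K) (d : K), (∀ i, c i ≠ 0) ∧ d ≠ 0 ∧
    (∀ i, b i = c i • v i) ∧ (b 0 + b 1 + b 2 = d • p) ∧
    φ = b.dualBasis 0 + b.dualBasis 1 + b.dualBasis 2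

/-- in the homogeneous coordinates defined by the frame
`(p₁, p₂, p₃, p) = ([1:0:0], [0:1:0], [0:0:1], [1:1:1])`, the harmonic polar `p^#`
(the line through the fourth harmonics `uᵢ'` of `(pⱼ, pₖ, uᵢ)`, where
`uᵢ = (pᵢp) ∩ (pⱼpₖ)`) coincides with the frame polar `p^•`: both are the line of
equation `x₁ + x₂ + x₃ = 0`.  Concretely: every representative `φ` of the frame
polar is a nonzero multiple of the form `x ↦ x₁+x₂+x₃`, and every representative of
each fourth harmonic `uᵢ'` satisfies `x₁+x₂+x₃ = 0`. -/
theorem stmt5 (K : Type*) [Field K] (h2 : (2 : K) ≠ 0)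
    (e : Fin 3 → Fin 3 → K) (he : ∀ m, e m = (Pi.single m 1 : Fin 3 → K))
    (p : Fin 3 → K) (hpp : p = fun _ => 1) :
    (∀ φ : Module.Dual K (Fin 3 → K), IsFramePolar e p φ →
      ∃ t : K, t ≠ 0 ∧ ∀ x, φ x = t * (x 0 + x 1 + x 2)) ∧
    (∀ i j k : Fin 3, ({i, j, k} : Set (Fin 3)) = Set.univ →
      ∀ u' : Fin 3 → K, IsFourthHarmonic K (e j) (e k) (e j + e k) u' →
        u' 0 + u' 1 + u' 2 = 0) := by
  subst hpp
  constructor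
  · rintro φ ⟨b, c, d, hc, hd, hb, hsum, hφ⟩
    have hcd : ∀ i, c i = d := by
      intro i
      have h := congrFun hsum i
      rw [hb 0, hb 1, hb 2, he 0, he 1, he 2] at h
      fin_cases i <;> simpa [Pi.single_apply] using h
    have hb' : ∀ i, b i = Pi.single i d := by
      intro i
      rw [hb i, he i]
      ext x
      simp [Pi.single_apply, hcd i, mul_ite]
    refine ⟨d⁻¹, inv_ne_zero hd, fun x => ?_⟩
    have hx : x = (d⁻¹ * x 0) • b 0 + (d⁻¹ * x 1) • b 1 + (d⁻¹ * x 2) • b 2 := by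
      ext i
      rw [hb' 0, hb' 1, hb' 2]
      fin_cases i <;> simp [Pi.single_apply] <;> field_simp
    nth_rewrite 1 [hx]
    rw [hφ]
    simp only [map_add, map_smul, LinearMap.add_apply, Module.Basis.dualBasis_apply_self,
      smul_eq_mul]
    norm_num [Fin.ext_iff]
    ring
  · rintro i j k hijk u' ⟨α, β, hα, hβ, hαβ, t, ht, hu⟩
    have hne : ∀ i j : Fin 3, ¬ ∀ x : Fin 3, x = i ∨ x = j := by decide
    have hjk : j ≠ k := by
      intro h
      apply hne i j
      intro x
      have hx : x ∈ ({i, j, k} : Set (Fin 3)) := hijk ▸ Set.mem_univ x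
      rcases hx with hx | hx | hx
      · exact Or.inl hx
      · exact Or.inr hx
      · exact Or.inr (h ▸ hx)
    have hα1 : α = 1 := by
      have h := congrFun hαβ j
      rw [he j, he k] at h
      simpa [Pi.single_apply, Ne.symm hjk] using h.symm
    have hβ1 : β = 1 := by
      have h := congrFun hαβ k
      rw [he j, he k] at h
      simpa [Pi.single_apply, hjk] using h.symm
    have hsum3 : ∀ m : Fin 3, e m 0 + e m 1 + e m 2 = 1 := by
      intro m; rw [he m]; fin_cases m <;> simp [Pi.single_apply]
    have hu3 : u' 0 + u' 1 + u' 2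
        = t * ((e j 0 + e j 1 + e j 2) - (e k 0 + e k 1 + e k 2)) := by
      rw [hu, hα1, hβ1]
      simp only [one_smul, Pi.smul_apply, Pi.sub_apply, smul_eq_mul]
      ring
    rw [hu3, hsum3 j, hsum3 k]
    ring
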